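/- For every compact metric tree (T,d_T) and every even number k, one has m_k(T,d_T) ≤ H^1(T), the 1-dimensional Hausdorff measure of T. -/

import Mathlib

open MeasureTheory

/-- A matching on `X`: a partition of `X` into two-element subsets,
encoded as a fixed-point-free involution. -/
def IsMatching {X : Type*} (π : X → X) : Prop :=
  Function.Involutive π ∧ ∀ x, π x ≠ x

/-- The matching number of a matching `π` with respect to `d`:
`∑_{{x,y} ∈ π} d(x,y)` (each pair is counted twice in the sum, whence the division). -/
noncomputable def matchVal {X : Type*} [Fintype X] (d : X → X → ℝ) (π : X → X) : ℝ :=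
  (∑ x, d x (π x)) / 2

/-- The matching number `m(X,d)`: the minimum of `m(π,d)` over all matchings `π` on `X`. -/
noncomputable def matchNum {X : Type*} [Fintype X] (d : X → X → ℝ) : ℝ :=
  sInf {r | ∃ π : X → X, IsMatching π ∧ r = matchVal d π}

/-- `d` is a pseudometric on `X`. -/
def IsPseudometric {X : Type*} (d : X → X → ℝ) : Prop :=
  (∀ x, d x x = 0) ∧ (∀ x y, d x y = d y x) ∧ ∀ x y z, d x z ≤ d x y + d y z

/-- A metric space is geodesic if any two points `x`, `y` are joined by an isometric
embedding of the interval `[0, dist x y]`. -/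
def IsGeodesicSpace (T : Type*) [MetricSpace T] : Prop :=
  ∀ x y : T, ∃ γ : ℝ → T, γ 0 = x ∧ γ (dist x y) = y ∧
    ∀ s ∈ Set.Icc (0 : ℝ) (dist x y), ∀ t ∈ Set.Icc (0 : ℝ) (dist x y),
      dist (γ s) (γ t) = |s - t|

/-- The four-point (tree-likeness) condition for a metric space. -/
def FourPointCond (T : Type*) [MetricSpace T] : Prop :=
  ∀ x₁ x₂ x₃ x₄ : T, dist x₁ x₃ + dist x₂ x₄ ≤
    max (dist x₁ x₂ + dist x₃ x₄) (dist x₁ x₄ + dist x₂ x₃)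

/-- A metric tree: a complete geodesic metric space satisfying the four-point condition. -/
def IsMetricTree (T : Type*) [MetricSpace T] : Prop :=
  CompleteSpace T ∧ IsGeodesicSpace T ∧ FourPointCond T

/-- `S` is `ε`-separated: distinct points of `S` are at distance at least `ε`. -/
def IsEpsSeparated {X : Type*} [MetricSpace X] (ε : ℝ) (S : Finset X) : Prop :=
  ∀ x ∈ S, ∀ y ∈ S, x ≠ y → ε ≤ dist x y

/-- The matching number `m_k(Y,d)`: the supremum, over all `k`-tuples of points of `Y`
(repetitions allowed), of the matching number of the induced pseudometric on `Fin k`. -/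
noncomputable def matchK {X : Type*} [MetricSpace X] (Y : Set X) (k : ℕ) : ℝ :=
  sSup {r | ∃ x : Fin k → X, (∀ i, x i ∈ Y) ∧
    r = matchNum (fun i j => dist (x i) (x j))}

/-- The matching number `m'_ε(Y,d)`: the supremum of `m(S,d)` over all finite
`ε`-separated subsets `S ⊆ Y` of even cardinality (`sSup ∅ = 0` in `ℝ`). -/
noncomputable def matchSep {X : Type*} [MetricSpace X] (Y : Set X) (ε : ℝ) : ℝ :=
  sSup {r | ∃ S : Finset X, ↑S ⊆ Y ∧ IsEpsSeparated ε S ∧ Even S.card ∧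
    r = matchNum (fun x y : ↥S => dist x.1 y.1)}

open scoped NNReal ENNReal

/-- Existence of a matching on `Fin k` for even `k`. -/
lemma exists_isMatching {k : ℕ} (hk : Even k) : ∃ π : Fin k → Fin k, IsMatching π := by
  obtain ⟨m, hm⟩ := hk
  refine ⟨fun i => if h : (i : ℕ) < m then ⟨i + m, by omega⟩ else ⟨(i : ℕ) - m, by omega⟩, ?_, ?_⟩
  · intro i
    by_cases h : (i : ℕ) < m
    · have hi := i.2
      simp only [h, dif_pos]
      have : ¬ ((⟨(i : ℕ) + m, by omega⟩ : Fin k) : ℕ) < m := by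
        show ¬ (i : ℕ) + m < m; omega
      rw [dif_neg this]
      apply Fin.ext; show (i : ℕ) + m - m = (i : ℕ); omega
    · have hi := i.2
      simp only [h, dif_neg, not_false_iff]
      have : ((⟨(i : ℕ) - m, by omega⟩ : Fin k) : ℕ) < m := by
        show (i : ℕ) - m < m; omega
      rw [dif_pos this]
      apply Fin.ext; show (i : ℕ) - m + m = (i : ℕ); omega
  · intro i
    have hi := i.2
    by_cases h : (i : ℕ) < m
    · simp only [h, dif_pos]
      intro hcon
      have : (i : ℕ) + m = (i : ℕ) := congrArg Fin.val hcon
      omega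
    · simp only [h, dif_neg, not_false_iff]
      intro hcon
      have : (i : ℕ) - m = (i : ℕ) := congrArg Fin.val hcon
      omega

/-- Halving: the matching sum equals twice the sum over representatives. -/
lemma sum_matching_eq {k : ℕ} (π : Fin k → Fin k) (hπ : IsMatching π) (f : Fin k → ℝ)
    (hf : ∀ i, f (π i) = f i) :
    ∑ i, f i = 2 * ∑ i ∈ Finset.univ.filter (fun i => i < π i), f i := by
  classical
  rw [← Finset.sum_filter_add_sum_filter_not Finset.univ (fun i => i < π i) f]
  have h1 : Finset.univ.filter (fun i => ¬ i < π i) = Finset.univ.filter (fun i => π i < i) := by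
    apply Finset.filter_congr
    intro i _
    simp only [not_lt]
    constructor
    · intro h; exact lt_of_le_of_ne h (hπ.2 i)
    · exact le_of_lt
  rw [h1]
  have h2 : ∑ i ∈ Finset.univ.filter (fun i => π i < i), f i
      = ∑ i ∈ Finset.univ.filter (fun i => i < π i), f i := by
    refine Finset.sum_nbij' (i := fun a => π a) (j := fun a => π a) ?_ ?_ ?_ ?_ ?_
    · intro a ha
      simp only [Finset.mem_filter, Finset.mem_univ, true_and] at ha ⊢
      rw [hπ.1 a]; exact ha
    · intro a ha
      simp only [Finset.mem_filter, Finset.mem_univ, true_and] at ha ⊢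
      rw [hπ.1 a]; exact ha
    · intro a _; exact hπ.1 a
    · intro a _; exact hπ.1 a
    · intro a _; exact (hf a).symm
  rw [h2]; ring

/-- Rewiring two pairs of a matching. -/
lemma swap_improve {k : ℕ} (d : Fin k → Fin k → ℝ) (hsymm : ∀ i j, d i j = d j i)
    (π : Fin k → Fin k) (hπ : IsMatching π) (a c : Fin k) (hac : a ≠ c) (hac' : a ≠ π c)
    (δ : ℝ) (hineq : d a c + d (π a) (π c) ≤ d a (π a) + d c (π c) - δ) :
    ∃ π' : Fin k → Fin k, IsMatching π' ∧ matchVal d π' ≤ matchVal d π - δ := by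
  classical
  set b := π a with hb
  set e := π c with he
  have hinv := hπ.1
  have hab : a ≠ b := fun h => hπ.2 a h.symm
  have hce : c ≠ e := fun h => hπ.2 c h.symm
  have hbc : b ≠ c := by
    intro h
    apply hac'
    have := congrArg π h
    rw [hb, hinv a, ← he] at this
    exact this
  have hbe : b ≠ e := by
    intro h
    apply hac
    have := congrArg π h
    rwa [hb, he, hinv a, hinv c] at this
  have hae : a ≠ e := hac'
  set π' : Fin k → Fin k := fun t =>
    if t = a then c else if t = c then a else if t = b then e else if t = e then b else π t
    with hπ'def
  have hπ'a : π' a = c := by simp [hπ'def]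
  have hπ'c : π' c = a := by simp [hπ'def, hac.symm]
  have hπ'b : π' b = e := by simp [hπ'def, hab.symm, hbc]
  have hπ'e : π' e = b := by simp [hπ'def, hae.symm, hce.symm, hbe.symm]
  have hπ'other : ∀ t, t ≠ a → t ≠ c → t ≠ b → t ≠ e → π' t = π t := by
    intro t h1 h2 h3 h4; simp [hπ'def, h1, h2, h3, h4]
  refine ⟨π', ⟨?_, ?_⟩, ?_⟩
  · intro t
    by_cases h1 : t = a; · rw [h1, hπ'a, hπ'c]
    by_cases h2 : t = c; · rw [h2, hπ'c, hπ'a]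
    by_cases h3 : t = b; · rw [h3, hπ'b, hπ'e]
    by_cases h4 : t = e; · rw [h4, hπ'e, hπ'b]
    rw [hπ'other t h1 h2 h3 h4]
    have h5 : π t ≠ a := by
      intro h; apply h3
      have := congrArg π h; rw [hinv t] at this; exact this
    have h6 : π t ≠ c := by
      intro h; apply h4
      have := congrArg π h; rw [hinv t] at this; exact this
    have h7 : π t ≠ b := by
      intro h; apply h1
      have := congrArg π h; rwa [hinv, hb, hinv] at this
    have h8 : π t ≠ e := by
      intro h; apply h2
      have := congrArg π h; rwa [hinv, he, hinv] at this
    rw [hπ'other (π t) h5 h6 h7 h8, hinv]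
  · intro t
    by_cases h1 : t = a; · rw [h1, hπ'a]; exact hac.symm
    by_cases h2 : t = c; · rw [h2, hπ'c]; exact hac
    by_cases h3 : t = b; · rw [h3, hπ'b]; exact hbe.symm
    by_cases h4 : t = e; · rw [h4, hπ'e]; exact hbe
    rw [hπ'other t h1 h2 h3 h4]; exact hπ.2 t
  · have hs : ({a, b, c, e} : Finset (Fin k)) ⊆ Finset.univ := Finset.subset_univ _
    have hsum : ∀ g : Fin k → ℝ,
        ∑ t, g t = ∑ t ∈ Finset.univ \ {a, b, c, e}, g t + (g a + (g b + (g c + g e))) := by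
      intro g
      rw [← Finset.sum_sdiff hs]
      congr 1
      rw [Finset.sum_insert (by simp [hab, hac, hae]),
        Finset.sum_insert (by simp [hbc, hbe]),
        Finset.sum_insert (by simp [hce]), Finset.sum_singleton]
    have h1 := hsum (fun t => d t (π' t))
    have h2 := hsum (fun t => d t (π t))
    have h3 : ∑ t ∈ Finset.univ \ {a, b, c, e}, d t (π' t)
        = ∑ t ∈ Finset.univ \ {a, b, c, e}, d t (π t) := by
      apply Finset.sum_congr rfl
      intro t ht
      simp only [Finset.mem_sdiff, Finset.mem_insert, Finset.mem_singleton, not_or] at ht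
      rw [hπ'other t ht.2.1 ht.2.2.2.1 ht.2.2.1 ht.2.2.2.2]
    have hπb : π b = a := by rw [hb, hinv]
    have hπe : π e = c := by rw [he, hinv]
    simp only [matchVal]
    rw [h1, h2, h3, hπ'a, hπ'b, hπ'c, hπ'e, hπb, hπe]
    have e1 := hsymm c a
    have e2 := hsymm e b
    have e3 := hsymm b a
    have e4 := hsymm e c
    rw [← hb, ← he]
    linarith

/-- If `p, q` lie on both geodesics `[xi, xpi]` (at parameters `s, t`, lengths `Li`) and
`[xj, xpj]` (at parameters `u, v`, length `Lj`), then one of the two rewirings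
saves `2 * dist p q`. -/
lemma key_rewire {T : Type*} [MetricSpace T] (xi xpi xj xpj p q : T)
    (s t u v Li Lj : ℝ)
    (h1 : dist xi p = s) (h2 : dist p xpi = Li - s)
    (h3 : dist xi q = t) (h4 : dist q xpi = Li - t)
    (h5 : dist xj p = u) (h6 : dist p xpj = Lj - u)
    (h7 : dist xj q = v) (h8 : dist q xpj = Lj - v)
    (hpq1 : dist p q = |s - t|) (hpq2 : dist p q = |u - v|) :
    dist xi xj + dist xpi xpj ≤ Li + Lj - 2 * dist p q ∨
    dist xi xpj + dist xpi xj ≤ Li + Lj - 2 * dist p q := by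
  have t1 := dist_triangle xi p xj
  have t2 := dist_triangle xi q xj
  have t3 := dist_triangle xpi p xpj
  have t4 := dist_triangle xpi q xpj
  have t5 := dist_triangle xi p xpj
  have t6 := dist_triangle xi q xpj
  have t7 := dist_triangle xpi p xj
  have t8 := dist_triangle xpi q xj
  have c1 : dist p xj = dist xj p := dist_comm _ _
  have c2 : dist q xj = dist xj q := dist_comm _ _
  have c3 : dist xpi p = dist p xpi := dist_comm _ _
  have c4 : dist xpi q = dist q xpi := dist_comm _ _
  rcases le_total s t with hst | hst <;> rcases le_total u v with huv | huv
  · left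
    rw [abs_of_nonpos (by linarith)] at hpq1
    rw [abs_of_nonpos (by linarith)] at hpq2
    linarith
  · right
    rw [abs_of_nonpos (by linarith)] at hpq1
    rw [abs_of_nonneg (by linarith)] at hpq2
    linarith
  · right
    rw [abs_of_nonneg (by linarith)] at hpq1
    rw [abs_of_nonpos (by linarith)] at hpq2
    linarith
  · left
    rw [abs_of_nonneg (by linarith)] at hpq1
    rw [abs_of_nonneg (by linarith)] at hpq2
    linarith

/-- Core bound: for each tuple there is a matching whose value is at most `μH¹(T)`. -/
lemma main_bound {T : Type*} [MetricSpace T] [MeasurableSpace T] [BorelSpace T]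
    (hT : IsMetricTree T) {k : ℕ} (hk : Even k) (x : Fin k → T) :
    ∃ π : Fin k → Fin k, IsMatching π ∧
      ENNReal.ofReal (matchVal (fun i j => dist (x i) (x j)) π) ≤ μH[1] (Set.univ : Set T) := by
  classical
  set d : Fin k → Fin k → ℝ := fun i j => dist (x i) (x j) with hd
  have hne : (Finset.univ.filter (fun π : Fin k → Fin k => IsMatching π)).Nonempty := by
    obtain ⟨π, hπ⟩ := exists_isMatching hk
    exact ⟨π, by simp [hπ]⟩
  obtain ⟨π, hπmem, hπmin⟩ := Finset.exists_min_image _ (matchVal d) hne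
  have hπ : IsMatching π := by simpa using hπmem
  have hmin : ∀ π' : Fin k → Fin k, IsMatching π' → matchVal d π ≤ matchVal d π' := by
    intro π' h'; exact hπmin π' (by simp [h'])
  refine ⟨π, hπ, ?_⟩
  have hinv := hπ.1
  set L : Fin k → ℝ := fun i => dist (x i) (x (π i)) with hL
  choose γ hγ0 hγL hγiso using fun i => hT.2.1 (x i) (x (π i))
  have hγiso' : ∀ i, ∀ s ∈ Set.Icc (0:ℝ) (L i), ∀ t ∈ Set.Icc (0:ℝ) (L i),
      dist (γ i s) (γ i t) = |s - t| := hγiso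
  set S : Fin k → Set T := fun i => γ i '' Set.Icc 0 (L i) with hS
  have hLnn : ∀ i, 0 ≤ L i := fun i => dist_nonneg
  have hd1 : ∀ i, ∀ s ∈ Set.Icc (0:ℝ) (L i), dist (x i) (γ i s) = s := by
    intro i s hs
    rw [← hγ0 i, hγiso' i 0 ⟨le_refl 0, hLnn i⟩ s hs,
      abs_of_nonpos (by linarith [hs.1])]
    ring
  have hd2 : ∀ i, ∀ s ∈ Set.Icc (0:ℝ) (L i), dist (γ i s) (x (π i)) = L i - s := by
    intro i s hs
    have hL' : γ i (L i) = x (π i) := hγL i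
    rw [← hL', hγiso' i s hs (L i) ⟨hLnn i, le_refl _⟩,
      abs_of_nonpos (by linarith [hs.2])]
    ring
  -- intersections of segments of distinct pairs of a minimal matching are subsingletons
  have hkey : ∀ i j : Fin k, i < π i → j < π j → i ≠ j → Set.Subsingleton (S i ∩ S j) := by
    intro i j hi hj hij p hp q hq
    by_contra hpqne
    have hij2 : i ≠ π j := by
      intro h
      rw [← h] at hj
      have : π i = j := by rw [h, hinv]
      rw [this] at hi
      exact lt_irrefl i (hi.trans hj)
    obtain ⟨⟨s, hs, hps⟩, ⟨u, hu, hpu⟩⟩ := hp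
    obtain ⟨⟨t, ht, hqt⟩, ⟨v, hv, hqv⟩⟩ := hq
    have hdpq : 0 < dist p q := dist_pos.2 hpqne
    have key := key_rewire (x i) (x (π i)) (x j) (x (π j)) p q s t u v (L i) (L j)
      (by rw [← hps]; exact hd1 i s hs) (by rw [← hps]; exact hd2 i s hs)
      (by rw [← hqt]; exact hd1 i t ht) (by rw [← hqt]; exact hd2 i t ht)
      (by rw [← hpu]; exact hd1 j u hu) (by rw [← hpu]; exact hd2 j u hu)
      (by rw [← hqv]; exact hd1 j v hv) (by rw [← hqv]; exact hd2 j v hv)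
      (by rw [← hps, ← hqt]; exact hγiso' i s hs t ht)
      (by rw [← hpu, ← hqv]; exact hγiso' j u hu v hv)
    rcases key with hkey1 | hkey1
    · obtain ⟨π', hπ', hval⟩ := swap_improve d (fun a b => dist_comm _ _) π hπ i j hij hij2
        (2 * dist p q) (by
          show dist (x i) (x j) + dist (x (π i)) (x (π j))
            ≤ dist (x i) (x (π i)) + dist (x j) (x (π j)) - 2 * dist p q
          exact hkey1)
      have := hmin π' hπ'
      linarith
    · have hij3 : i ≠ π (π j) := by rw [hinv]; exact hij
      obtain ⟨π', hπ', hval⟩ := swap_improve d (fun a b => dist_comm _ _) π hπ i (π j) hij2 hij3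
        (2 * dist p q) (by
          rw [hinv j]
          show dist (x i) (x (π j)) + dist (x (π i)) (x j)
            ≤ dist (x i) (x (π i)) + dist (x (π j)) (x j) - 2 * dist p q
          rw [dist_comm (x (π j)) (x j)]
          exact hkey1)
      have := hmin π' hπ'
      linarith
  -- measure estimates
  haveI : NullSingletonClass (μH[1] : Measure T) := Measure.nullSingletonClass_hausdorff T one_pos
  have hlipOn : ∀ i, LipschitzOnWith 1 (γ i) (Set.Icc 0 (L i)) := by
    intro i
    apply LipschitzOnWith.of_dist_le_mul
    intro a ha b hb
    rw [hγiso' i a ha b hb, NNReal.coe_one, one_mul, Real.dist_eq]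
  have hScompact : ∀ i, IsCompact (S i) :=
    fun i => isCompact_Icc.image_of_continuousOn (hlipOn i).continuousOn
  have hlow : ∀ i, ENNReal.ofReal (L i) ≤ μH[1] (S i) := by
    intro i
    have himg : Set.Icc 0 (L i) ⊆ (fun p => dist (x i) p) '' S i := by
      intro τ hτ
      exact ⟨γ i τ, ⟨τ, hτ, rfl⟩, hd1 i τ hτ⟩
    have hlip := (LipschitzWith.dist_right (x i)).hausdorffMeasure_image_le
      (le_of_lt one_pos) (S i)
    calc ENNReal.ofReal (L i) = μH[1] (Set.Icc 0 (L i)) := by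
          rw [hausdorffMeasure_real, Real.volume_Icc, sub_zero]
      _ ≤ μH[1] ((fun p => dist (x i) p) '' S i) := measure_mono himg
      _ ≤ ((1 : ℝ≥0) : ℝ≥0∞) ^ (1:ℝ) * μH[1] (S i) := hlip
      _ = μH[1] (S i) := by simp
  set R := Finset.univ.filter (fun i : Fin k => i < π i) with hR
  have hAE : Set.Pairwise ↑R (Function.onFun (AEDisjoint (μH[1] : Measure T)) S) := by
    intro i hi j hj hij
    simp only [hR, Finset.coe_filter, Set.mem_setOf_eq] at hi hj
    exact (hkey i j hi.2 hj.2 hij).measure_zero _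
  have hunion := measure_biUnion_finset₀ (μ := (μH[1] : Measure T)) hAE
    (fun i _ => (hScompact i).isClosed.measurableSet.nullMeasurableSet)
  have hmv : matchVal d π = ∑ i ∈ R, L i := by
    have := sum_matching_eq π hπ (fun i => d i (π i)) (by
      intro i
      show dist (x (π i)) (x (π (π i))) = dist (x i) (x (π i))
      rw [hinv i, dist_comm])
    rw [matchVal, this]
    ring
  calc ENNReal.ofReal (matchVal d π) = ∑ i ∈ R, ENNReal.ofReal (L i) := by
        rw [hmv, ENNReal.ofReal_sum_of_nonneg (fun i _ => hLnn i)]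
    _ ≤ ∑ i ∈ R, μH[1] (S i) := Finset.sum_le_sum (fun i _ => hlow i)
    _ = μH[1] (⋃ i ∈ R, S i) := hunion.symm
    _ ≤ μH[1] (Set.univ : Set T) := measure_mono (Set.subset_univ _)

/-- For every compact metric tree `T` and every even `k`,
`m_k(T, d_T) ≤ H¹(T)` (the `1`-dimensional Hausdorff measure of `T`). -/
theorem stmt17 {T : Type*} [MetricSpace T] [CompactSpace T]
    [MeasurableSpace T] [BorelSpace T] (hT : IsMetricTree T)
    (k : ℕ) (hk : Even k) :
    ENNReal.ofReal (matchK (Set.univ : Set T) k) ≤ μH[1] (Set.univ : Set T) := by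
  classical
  by_cases hfin : μH[1] (Set.univ : Set T) = ⊤
  · rw [hfin]; exact le_top
  have hB : (0:ℝ) ≤ (μH[1] (Set.univ : Set T)).toReal := ENNReal.toReal_nonneg
  have hbound : matchK (Set.univ : Set T) k ≤ (μH[1] (Set.univ : Set T)).toReal := by
    apply Real.sSup_le _ hB
    rintro r ⟨x, -, rfl⟩
    obtain ⟨π, hπ, hle⟩ := main_bound hT hk x
    have h1 : matchNum (fun i j => dist (x i) (x j))
        ≤ matchVal (fun i j => dist (x i) (x j)) π := by
      apply csInf_le
      · refine ⟨0, ?_⟩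
        rintro r ⟨π', hπ', rfl⟩
        apply div_nonneg _ (by norm_num)
        exact Finset.sum_nonneg fun i _ => dist_nonneg
      · exact ⟨π, hπ, rfl⟩
    have h2 : matchVal (fun i j => dist (x i) (x j)) π ≤ (μH[1] (Set.univ : Set T)).toReal :=
      (ENNReal.ofReal_le_iff_le_toReal hfin).1 hle
    linarith
  calc ENNReal.ofReal (matchK (Set.univ : Set T) k)
      ≤ ENNReal.ofReal ((μH[1] (Set.univ : Set T)).toReal) := ENNReal.ofReal_le_ofReal hbound
    _ = μH[1] (Set.univ : Set T) := ENNReal.ofReal_toReal hfin
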